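/- (Generalized Lagrange identity on ℝ.) Let (u,u1) be an l-pair with output f and (v,v1) an l⁺-pair with output g, and assume u, f, v, g all belong to L²(ℝ,ℂ^m). Then ∫_ℝ (f(x), v(x)) dx − ∫_ℝ (u(x), g(x)) dx = [u,v](+∞) − [u,v](−∞), where [u,v](t) := (u(t), v1(t)) − (u1(t), v(t)) and [u,v](±∞) denote the (existing, finite) limits of [u,v](t) as t → ±∞. -/

import Mathlib

open MeasureTheory Matrix Filter Topology

noncomputable section

abbrev Em (m : ℕ) := EuclideanSpace ℂ (Fin m)

/-- Matrix action on `ℂ^m`. -/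
def mv (m : ℕ) (A : Matrix (Fin m) (Fin m) ℂ) (x : Em m) : Em m := WithLp.toLp 2 (A.mulVec x)

/-- `(u,u1)` is an l-pair with output `f` for the Shin–Zettl data `(Q,s)`. -/
def IsLpair (m : ℕ) (Q s : ℝ → Matrix (Fin m) (Fin m) ℂ)
    (u u1 f : ℝ → Em m) : Prop :=
  LocallyIntegrable f volume ∧ Continuous u ∧ Continuous u1 ∧
  (∀ a x : ℝ, u x = u a + ∫ t in a..x, (mv m (Q t) (u t) + u1 t)) ∧
  (∀ a x : ℝ, u1 x = u1 a +
     ∫ t in a..x, (mv m (s t - Q t ^ 2) (u t) - mv m (Q t) (u1 t) - f t))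

/-- `(v,v1)` is an l⁺-pair with output `g`: same with `Q,s` replaced by their
conjugate transposes. -/
def IsLplusPair (m : ℕ) (Q s : ℝ → Matrix (Fin m) (Fin m) ℂ)
    (v v1 g : ℝ → Em m) : Prop :=
  IsLpair m (fun t => (Q t)ᴴ) (fun t => (s t)ᴴ) v v1 g

/-- `Q` is locally square-integrable (entrywise). -/
def LocL2 (m : ℕ) (Q : ℝ → Matrix (Fin m) (Fin m) ℂ) : Prop :=
  ∀ i j : Fin m, ∀ K : Set ℝ, IsCompact K →
    MemLp (fun x => Q x i j) 2 (volume.restrict K)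

/-- `s` is locally integrable (entrywise). -/
def LocL1 (m : ℕ) (s : ℝ → Matrix (Fin m) (Fin m) ℂ) : Prop :=
  ∀ i j : Fin m, LocallyIntegrable (fun x => s x i j) volume

/-- The `ℂ^m` inner product `(a,b) = ∑ i, aᵢ * conj bᵢ`. -/
def dotc (m : ℕ) (a b : Em m) : ℂ := ∑ i, a i * (starRingEnd ℂ) (b i)

/-- `⟨u,v⟩ = ∫ (u(x), v(x)) dx`. -/
def pairing (m : ℕ) (u v : ℝ → Em m) : ℂ := ∫ x : ℝ, dotc m (u x) (v x)

abbrev L2m (m : ℕ) := Lp (Em m) 2 (volume : Measure ℝ)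

/-- The maximal graph `G`. -/
def Gmax (m : ℕ) (Q s : ℝ → Matrix (Fin m) (Fin m) ℂ) : Set (L2m m × L2m m) :=
  {p | ∃ u u1 f : ℝ → Em m, IsLpair m Q s u u1 f ∧
        u =ᵐ[volume] p.1 ∧ f =ᵐ[volume] p.2}

/-- The preminimal graph `G₀₀`. -/
def G00 (m : ℕ) (Q s : ℝ → Matrix (Fin m) (Fin m) ℂ) : Set (L2m m × L2m m) :=
  {p | ∃ u u1 f : ℝ → Em m, IsLpair m Q s u u1 f ∧ HasCompactSupport u ∧
        u =ᵐ[volume] p.1 ∧ f =ᵐ[volume] p.2}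

/-- The maximal graph `G⁺`. -/
def GmaxPlus (m : ℕ) (Q s : ℝ → Matrix (Fin m) (Fin m) ℂ) : Set (L2m m × L2m m) :=
  {p | ∃ v v1 g : ℝ → Em m, IsLplusPair m Q s v v1 g ∧
        v =ᵐ[volume] p.1 ∧ g =ᵐ[volume] p.2}

/-- The preminimal graph `G₀₀⁺`. -/
def G00Plus (m : ℕ) (Q s : ℝ → Matrix (Fin m) (Fin m) ℂ) : Set (L2m m × L2m m) :=
  {p | ∃ v v1 g : ℝ → Em m, IsLplusPair m Q s v v1 g ∧ HasCompactSupport v ∧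
        v =ᵐ[volume] p.1 ∧ g =ᵐ[volume] p.2}


section Helpers
variable {m : ℕ}


lemma dotc_eq_inner (a b : Em m) : dotc m a b = inner (𝕜 := ℂ) b a := by
  simp [dotc, PiLp.inner_apply, RCLike.inner_apply, mul_comm]

lemma norm_dotc_le (a b : Em m) : ‖dotc m a b‖ ≤ ‖a‖ * ‖b‖ := by
  rw [dotc_eq_inner, mul_comm]; exact norm_inner_le_norm _ _

lemma continuous_dotc : Continuous (fun p : Em m × Em m => dotc m p.1 p.2) := by
  simp only [dotc_eq_inner]
  exact continuous_inner.comp (continuous_snd.prodMk continuous_fst)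

lemma dotc_add_left (a a' b : Em m) : dotc m (a + a') b = dotc m a b + dotc m a' b := by
  simp [dotc, add_mul, Finset.sum_add_distrib]

lemma dotc_sub_left (a a' b : Em m) : dotc m (a - a') b = dotc m a b - dotc m a' b := by
  simp [dotc, sub_mul, Finset.sum_sub_distrib]

lemma dotc_add_right (a b b' : Em m) : dotc m a (b + b') = dotc m a b + dotc m a b' := by
  simp [dotc, mul_add, Finset.sum_add_distrib]

lemma dotc_sub_right (a b b' : Em m) : dotc m a (b - b') = dotc m a b - dotc m a b' := by
  simp [dotc, mul_sub, Finset.sum_sub_distrib]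

lemma dotc_zero_right (a : Em m) : dotc m a 0 = 0 := by simp [dotc]

lemma dotc_zero_left (a : Em m) : dotc m 0 a = 0 := by simp [dotc]

lemma dotc_mv (A : Matrix (Fin m) (Fin m) ℂ) (x y : Em m) :
    dotc m (mv m A x) y = dotc m x (mv m Aᴴ y) := by
  simp only [dotc, mv, Matrix.mulVec, dotProduct, Matrix.conjTranspose_apply,
    map_sum, Finset.sum_mul, Finset.mul_sum]
  rw [Finset.sum_comm]
  refine Finset.sum_congr rfl fun j _ => Finset.sum_congr rfl fun i _ => ?_
  simp only [_root_.map_mul, starRingEnd_apply, star_star]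
  ring

lemma mv_sub (A B : Matrix (Fin m) (Fin m) ℂ) (x : Em m) :
    mv m (A - B) x = mv m A x - mv m B x := by
  simp [mv, Matrix.sub_mulVec]



lemma memℒp_conj {p : ENNReal} {μ : Measure ℝ} {f : ℝ → ℂ} (hf : MemLp f p μ) :
    MemLp (fun x => (starRingEnd ℂ) (f x)) p μ :=
  hf.of_le (Complex.continuous_conj.comp_aestronglyMeasurable hf.1)
    (ae_of_all _ fun x => by simp)

lemma locL2_conjT {Q : ℝ → Matrix (Fin m) (Fin m) ℂ} (hQ : LocL2 m Q) :
    LocL2 m (fun t => (Q t)ᴴ) := by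
  intro i j K hK
  have := memℒp_conj (hQ j i K hK)
  simpa [Matrix.conjTranspose_apply, RCLike.star_def] using this

lemma locL1_conjT {s : ℝ → Matrix (Fin m) (Fin m) ℂ} (hs : LocL1 m s) :
    LocL1 m (fun t => (s t)ᴴ) := by
  intro i j
  rw [MeasureTheory.locallyIntegrable_iff]
  intro K hK
  have h1 : IntegrableOn (fun x => s x j i) K volume := (hs j i).integrableOn_isCompact hK
  have := memℒp_conj (memLp_one_iff_integrable.2 h1)
  simpa [IntegrableOn, Matrix.conjTranspose_apply, RCLike.star_def] using
    memLp_one_iff_integrable.1 this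

lemma integrable_of_comps {μ : Measure ℝ} {h : ℝ → Em m}
    (hc : ∀ i, Integrable (fun t => h t i) μ) : Integrable h μ := by
  have he : h = fun t => ∑ i, h t i • (EuclideanSpace.single i (1 : ℂ)) := by
    funext t
    ext j
    have key : ∀ (S : Finset (Fin m)), (∑ x ∈ S, h t x • EuclideanSpace.single x (1:ℂ)) j
        = ∑ x ∈ S, h t x * (if j = x then 1 else 0) := by
      intro S
      induction S using Finset.induction with
      | empty => simp
      | insert _ _ hnotmem ih =>
          rw [Finset.sum_insert hnotmem, Finset.sum_insert hnotmem, ← ih]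
          simp [EuclideanSpace.single_apply]
    rw [key]
    simp
  rw [he]
  exact integrable_finset_sum _ fun i _ => (hc i).smul_const _

lemma integrableOn_mv {A : ℝ → Matrix (Fin m) (Fin m) ℂ} {w : ℝ → Em m} {K : Set ℝ}
    (hK : IsCompact K)
    (hA : ∀ i j, IntegrableOn (fun t => A t i j) K volume)
    (hw : Continuous w) :
    IntegrableOn (fun t => mv m (A t) (w t)) K volume := by
  apply integrable_of_comps
  intro i
  have he : (fun t => mv m (A t) (w t) i) = fun t => ∑ j, A t i j * w t j := by
    funext t; simp [mv, Matrix.mulVec, dotProduct]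
  rw [he]
  apply integrable_finset_sum
  intro j _
  have hwj : Continuous fun t => w t j := (EuclideanSpace.proj j).continuous.comp hw
  obtain ⟨C, hC⟩ := hK.exists_bound_of_continuousOn hwj.continuousOn
  have hb : ∀ᵐ t ∂(volume.restrict K), ‖w t j‖ ≤ C :=
    (ae_restrict_iff' hK.measurableSet).2 (ae_of_all _ fun t ht => hC t ht)
  have := Integrable.bdd_mul (hA i j) hwj.aestronglyMeasurable hb
  exact this.congr (ae_of_all _ fun t => mul_comm _ _)

lemma isFiniteK {K : Set ℝ} (hK : IsCompact K) : IsFiniteMeasure (volume.restrict K) :=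
  ⟨by rw [Measure.restrict_apply_univ]; exact hK.measure_lt_top⟩

lemma entries_Q_int {Q : ℝ → Matrix (Fin m) (Fin m) ℂ} (hQ : LocL2 m Q) {K : Set ℝ}
    (hK : IsCompact K) (i j : Fin m) : IntegrableOn (fun t => Q t i j) K volume := by
  haveI := isFiniteK hK
  exact (hQ i j K hK).integrable one_le_two

lemma entries_sQ2_int {Q s : ℝ → Matrix (Fin m) (Fin m) ℂ} (hQ : LocL2 m Q) (hs : LocL1 m s)
    {K : Set ℝ} (hK : IsCompact K) (i j : Fin m) :
    IntegrableOn (fun t => (s t - Q t ^ 2) i j) K volume := by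
  have h1 : IntegrableOn (fun t => s t i j) K volume := (hs i j).integrableOn_isCompact hK
  have h2 : IntegrableOn (fun t => (Q t ^ 2) i j) K volume := by
    have he : (fun t => (Q t ^ 2) i j) = fun t => ∑ k, Q t i k * Q t k j := by
      funext t; rw [pow_two, Matrix.mul_apply]
    rw [he]
    apply integrable_finset_sum
    intro k _
    have hm : MemLp ((fun t => Q t i k) • fun t => Q t k j) 1 (volume.restrict K) :=
      MemLp.smul (hQ k j K hK) (hQ i k K hK)
    exact memLp_one_iff_integrable.1 hm
  have := h1.sub h2
  exact this


lemma integrable_dotc_left {μ : Measure ℝ} {P w : ℝ → Em m} (hP : Integrable P μ)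
    (hw : AEStronglyMeasurable w μ) {C : ℝ} (hC : ∀ᵐ t ∂μ, ‖w t‖ ≤ C) :
    Integrable (fun t => dotc m (P t) (w t)) μ := by
  have hm : AEStronglyMeasurable (fun t => dotc m (P t) (w t)) μ :=
    by have := hP.aestronglyMeasurable.prodMk hw; exact continuous_dotc.comp_aestronglyMeasurable (f := fun t => (P t, w t)) this
  apply Integrable.mono' (hP.norm.mul_const C) hm
  filter_upwards [hC] with t ht
  exact (norm_dotc_le _ _).trans (mul_le_mul_of_nonneg_left ht (norm_nonneg _))

lemma integrable_dotc_right {μ : Measure ℝ} {P w : ℝ → Em m} (hP : Integrable P μ)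
    (hw : AEStronglyMeasurable w μ) {C : ℝ} (hC : ∀ᵐ t ∂μ, ‖w t‖ ≤ C) :
    Integrable (fun t => dotc m (w t) (P t)) μ := by
  have hm : AEStronglyMeasurable (fun t => dotc m (w t) (P t)) μ :=
    by have := hw.prodMk hP.aestronglyMeasurable; exact continuous_dotc.comp_aestronglyMeasurable (f := fun t => (w t, P t)) this
  apply Integrable.mono' (hP.norm.mul_const C) hm
  filter_upwards [hC] with t ht
  calc ‖dotc m (w t) (P t)‖ ≤ ‖w t‖ * ‖P t‖ := norm_dotc_le _ _
    _ ≤ C * ‖P t‖ := mul_le_mul_of_nonneg_right ht (norm_nonneg _)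
    _ = ‖P t‖ * C := mul_comm _ _

lemma integral_dotc_left {μ : Measure ℝ} {P : ℝ → Em m} (hP : Integrable P μ) (c : Em m) :
    ∫ t, dotc m (P t) c ∂μ = dotc m (∫ t, P t ∂μ) c := by
  simp only [dotc_eq_inner]
  exact integral_inner hP c

lemma integral_dotc_right {μ : Measure ℝ} {P : ℝ → Em m} (hP : Integrable P μ) (c : Em m) :
    ∫ t, dotc m c (P t) ∂μ = dotc m c (∫ t, P t ∂μ) := by
  simp only [dotc_eq_inner]
  calc ∫ t, (inner ℂ (P t) c : ℂ) ∂μ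
      = ∫ t, (starRingEnd ℂ) (inner ℂ c (P t) : ℂ) ∂μ := by
        simp_rw [inner_conj_symm]
    _ = (starRingEnd ℂ) (∫ t, (inner ℂ c (P t) : ℂ) ∂μ) := integral_conj
    _ = (starRingEnd ℂ) (inner ℂ c (∫ t, P t ∂μ) : ℂ) := by rw [integral_inner hP]
    _ = (inner ℂ (∫ t, P t ∂μ) c : ℂ) := inner_conj_symm _ _

set_option maxHeartbeats 1000000 in
lemma star_fubini {a x : ℝ} {P Qt : ℝ → Em m}
    (hP : IntegrableOn P (Set.Ioc a x) volume) (hQ : IntegrableOn Qt (Set.Ioc a x) volume) :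
    dotc m (∫ t in Set.Ioc a x, P t) (∫ t in Set.Ioc a x, Qt t)
      = (∫ t in Set.Ioc a x, dotc m (P t) (∫ r in Set.Ioc a t, Qt r))
        + (∫ r in Set.Ioc a x, dotc m (∫ t in Set.Ioc a r, P t) (Qt r)) := by
  set μ := volume.restrict (Set.Ioc a x) with hμ
  set H : ℝ × ℝ → ℂ := fun z => dotc m (P z.1) (Qt z.2) with hH
  set S : Set (ℝ × ℝ) := {z | z.2 < z.1} with hS
  have hSmeas : MeasurableSet S := (isOpen_lt continuous_snd continuous_fst).measurableSet
  have hHmeas : AEStronglyMeasurable H (μ.prod μ) :=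
    by have : AEStronglyMeasurable (fun z : ℝ × ℝ => (P z.1, Qt z.2)) (μ.prod μ) :=
         hP.aestronglyMeasurable.comp_fst.prodMk hQ.aestronglyMeasurable.comp_snd
       exact continuous_dotc.comp_aestronglyMeasurable (f := fun z : ℝ × ℝ => (P z.1, Qt z.2)) this
  have hHint : Integrable H (μ.prod μ) := by
    apply Integrable.mono' (hP.norm.mul_prod hQ.norm) hHmeas
    exact ae_of_all _ fun z => norm_dotc_le _ _
  have hS1int : Integrable (S.indicator H) (μ.prod μ) := hHint.indicator hSmeas
  have hS2int : Integrable (Sᶜ.indicator H) (μ.prod μ) := hHint.indicator hSmeas.compl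
  have term1 : (∫ t in Set.Ioc a x, dotc m (P t) (∫ r in Set.Ioc a t, Qt r))
      = ∫ z, S.indicator H z ∂(μ.prod μ) := by
    rw [← MeasureTheory.integral_integral
      (f := fun t r => S.indicator H (t, r)) hS1int]
    apply integral_congr_ae
    filter_upwards [ae_restrict_mem measurableSet_Ioc] with t ht
    have h1 : Set.Iio t ∩ Set.Ioc a x = Set.Ioo a t := by
      ext r
      simp only [Set.mem_inter_iff, Set.mem_Ioc, Set.mem_Iio, Set.mem_Ioo]
      exact ⟨fun h => ⟨h.2.1, h.1⟩, fun h => ⟨h.2, h.1, h.2.le.trans ht.2⟩⟩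
    calc dotc m (P t) (∫ r in Set.Ioc a t, Qt r)
        = dotc m (P t) (∫ r, (Set.Iio t).indicator Qt r ∂μ) := by
          rw [integral_indicator measurableSet_Iio, hμ,
            Measure.restrict_restrict measurableSet_Iio, h1, integral_Ioc_eq_integral_Ioo]
      _ = ∫ r, dotc m (P t) ((Set.Iio t).indicator Qt r) ∂μ :=
          (integral_dotc_right (hQ.indicator measurableSet_Iio) _).symm
      _ = ∫ r, S.indicator H (t, r) ∂μ := by
          apply integral_congr_ae
          apply ae_of_all
          intro r
          by_cases hrt : r < t
          · simp [Set.indicator_of_mem, hrt, hS, hH, Set.mem_Iio]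
          · simp [Set.indicator_of_notMem, hrt, hS, hH, Set.mem_Iio, dotc_zero_right]
  have term2 : (∫ r in Set.Ioc a x, dotc m (∫ t in Set.Ioc a r, P t) (Qt r))
      = ∫ z, Sᶜ.indicator H z ∂(μ.prod μ) := by
    have swap := MeasureTheory.integral_integral_swap
      (f := fun t r => Sᶜ.indicator H (t, r)) (μ := μ) (ν := μ)
      hS2int
    rw [← MeasureTheory.integral_integral
      (f := fun t r => Sᶜ.indicator H (t, r)) hS2int, swap]
    apply integral_congr_ae
    filter_upwards [ae_restrict_mem measurableSet_Ioc] with r hr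
    have h1 : Set.Iic r ∩ Set.Ioc a x = Set.Ioc a r := by
      ext t
      simp only [Set.mem_inter_iff, Set.mem_Ioc, Set.mem_Iic]
      exact ⟨fun h => ⟨h.2.1, h.1⟩, fun h => ⟨h.2, h.1, h.2.trans hr.2⟩⟩
    calc dotc m (∫ t in Set.Ioc a r, P t) (Qt r)
        = dotc m (∫ t, (Set.Iic r).indicator P t ∂μ) (Qt r) := by
          rw [integral_indicator measurableSet_Iic, hμ,
            Measure.restrict_restrict measurableSet_Iic, h1]
      _ = ∫ t, dotc m ((Set.Iic r).indicator P t) (Qt r) ∂μ :=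
          (integral_dotc_left (hP.indicator measurableSet_Iic) _).symm
      _ = ∫ t, Sᶜ.indicator H (t, r) ∂μ := by
          apply integral_congr_ae
          apply ae_of_all
          intro t
          by_cases htr : t ≤ r
          · simp [Set.indicator_of_mem, htr, hS, hH, Set.mem_Iic, not_lt.2 htr]
          · simp [Set.indicator_of_notMem, htr, hS, hH, Set.mem_Iic,
              lt_of_not_ge htr, dotc_zero_left]
  have hsum : (∫ z, S.indicator H z ∂(μ.prod μ)) + ∫ z, Sᶜ.indicator H z ∂(μ.prod μ)
      = ∫ z, H z ∂(μ.prod μ) := by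
    rw [← integral_add hS1int hS2int]
    apply integral_congr_ae
    apply ae_of_all
    intro z
    exact congrFun (Set.indicator_self_add_compl S H) z
  have hfull : (∫ z, H z ∂(μ.prod μ)) = dotc m (∫ t, P t ∂μ) (∫ t, Qt t ∂μ) := by
    rw [← MeasureTheory.integral_integral
      (f := fun t r => H (t, r)) hHint]
    calc ∫ t, ∫ r, H (t, r) ∂μ ∂μ
        = ∫ t, dotc m (P t) (∫ r, Qt r ∂μ) ∂μ := by
          apply integral_congr_ae
          apply ae_of_all
          intro t
          simpa [hH] using integral_dotc_right hQ (P t)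
      _ = dotc m (∫ t, P t ∂μ) (∫ r, Qt r ∂μ) := integral_dotc_left hP _
  rw [term1, term2, hsum, hfull]

set_option maxHeartbeats 1000000 in
lemma prod_rule_le {p q P Qf : ℝ → Em m} (hp : Continuous p) (hq : Continuous q)
    (hP : ∀ a b : ℝ, IntegrableOn P (Set.Ioc a b) volume)
    (hQ : ∀ a b : ℝ, IntegrableOn Qf (Set.Ioc a b) volume)
    (hpP : ∀ a x : ℝ, p x = p a + ∫ t in a..x, P t)
    (hqQ : ∀ a x : ℝ, q x = q a + ∫ t in a..x, Qf t) {a x : ℝ} (hax : a ≤ x) :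
    dotc m (p x) (q x) = dotc m (p a) (q a)
      + ∫ t in a..x, (dotc m (P t) (q t) + dotc m (p t) (Qf t)) := by
  rw [intervalIntegral.integral_of_le hax]
  have hPμ : Integrable P (volume.restrict (Set.Ioc a x)) := hP a x
  have hQμ : Integrable Qf (volume.restrict (Set.Ioc a x)) := hQ a x
  obtain ⟨Cq, hCq⟩ :=
    (isCompact_Icc (a := a) (b := x)).exists_bound_of_continuousOn hq.continuousOn
  obtain ⟨Cp, hCp⟩ :=
    (isCompact_Icc (a := a) (b := x)).exists_bound_of_continuousOn hp.continuousOn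
  have hqb : ∀ᵐ t ∂(volume.restrict (Set.Ioc a x)), ‖q t‖ ≤ Cq :=
    (ae_restrict_iff' measurableSet_Ioc).2 (ae_of_all _ fun t ht => hCq t ⟨ht.1.le, ht.2⟩)
  have hpb : ∀ᵐ t ∂(volume.restrict (Set.Ioc a x)), ‖p t‖ ≤ Cp :=
    (ae_restrict_iff' measurableSet_Ioc).2 (ae_of_all _ fun t ht => hCp t ⟨ht.1.le, ht.2⟩)
  have I1 : Integrable (fun t => dotc m (P t) (q t)) (volume.restrict (Set.Ioc a x)) :=
    integrable_dotc_left hPμ hq.aestronglyMeasurable hqb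
  have I2 : Integrable (fun t => dotc m (p t) (Qf t)) (volume.restrict (Set.Ioc a x)) :=
    integrable_dotc_right hQμ hp.aestronglyMeasurable hpb
  have J1 : Integrable (fun t => dotc m (P t) (q a)) (volume.restrict (Set.Ioc a x)) :=
    integrable_dotc_left hPμ aestronglyMeasurable_const (ae_of_all _ fun t => le_refl ‖q a‖)
  have J1' : Integrable (fun t => dotc m (p a) (Qf t)) (volume.restrict (Set.Ioc a x)) :=
    integrable_dotc_right hQμ aestronglyMeasurable_const (ae_of_all _ fun t => le_refl ‖p a‖)
  have e1 : ∀ᵐ t ∂(volume.restrict (Set.Ioc a x)),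
      dotc m (P t) (∫ r in Set.Ioc a t, Qf r) = dotc m (P t) (q t) - dotc m (P t) (q a) := by
    filter_upwards [ae_restrict_mem measurableSet_Ioc] with t ht
    have hqt : q t - q a = ∫ r in Set.Ioc a t, Qf r := by
      rw [← intervalIntegral.integral_of_le ht.1.le, hqQ a t]
      abel
    rw [← dotc_sub_right, hqt]
  have e2 : ∀ᵐ t ∂(volume.restrict (Set.Ioc a x)),
      dotc m (∫ r in Set.Ioc a t, P r) (Qf t) = dotc m (p t) (Qf t) - dotc m (p a) (Qf t) := by
    filter_upwards [ae_restrict_mem measurableSet_Ioc] with t ht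
    have hpt : p t - p a = ∫ r in Set.Ioc a t, P r := by
      rw [← intervalIntegral.integral_of_le ht.1.le, hpP a t]
      abel
    rw [← dotc_sub_left, hpt]
  have J2 : Integrable (fun t => dotc m (P t) (∫ r in Set.Ioc a t, Qf r))
      (volume.restrict (Set.Ioc a x)) := by
    apply (I1.sub J1).congr
    filter_upwards [e1] with t ht
    exact ht.symm
  have J2' : Integrable (fun t => dotc m (∫ r in Set.Ioc a t, P r) (Qf t))
      (volume.restrict (Set.Ioc a x)) := by
    apply (I2.sub J1').congr
    filter_upwards [e2] with t ht
    exact ht.symm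
  have c1 : (∫ t in Set.Ioc a x, dotc m (P t) (q t))
      = dotc m (∫ t in Set.Ioc a x, P t) (q a)
        + ∫ t in Set.Ioc a x, dotc m (P t) (∫ r in Set.Ioc a t, Qf r) := by
    have he : ∀ᵐ t ∂(volume.restrict (Set.Ioc a x)), dotc m (P t) (q t)
        = dotc m (P t) (q a) + dotc m (P t) (∫ r in Set.Ioc a t, Qf r) := by
      filter_upwards [e1] with t ht
      rw [ht]; ring
    rw [integral_congr_ae he, integral_add J1 J2, integral_dotc_left hPμ]
  have c2 : (∫ t in Set.Ioc a x, dotc m (p t) (Qf t))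
      = dotc m (p a) (∫ t in Set.Ioc a x, Qf t)
        + ∫ t in Set.Ioc a x, dotc m (∫ r in Set.Ioc a t, P r) (Qf t) := by
    have he : ∀ᵐ t ∂(volume.restrict (Set.Ioc a x)), dotc m (p t) (Qf t)
        = dotc m (p a) (Qf t) + dotc m (∫ r in Set.Ioc a t, P r) (Qf t) := by
      filter_upwards [e2] with t ht
      rw [ht]; ring
    rw [integral_congr_ae he, integral_add J1' J2', integral_dotc_right hQμ]
  have hstar := star_fubini (m := m) (hP a x) (hQ a x)
  calc dotc m (p x) (q x)
      = dotc m (p a + ∫ t in Set.Ioc a x, P t) (q a + ∫ t in Set.Ioc a x, Qf t) := by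
        rw [← intervalIntegral.integral_of_le hax, ← intervalIntegral.integral_of_le hax,
          ← hpP, ← hqQ]
    _ = dotc m (p a) (q a) + (dotc m (∫ t in Set.Ioc a x, P t) (q a)
          + dotc m (p a) (∫ t in Set.Ioc a x, Qf t)
          + dotc m (∫ t in Set.Ioc a x, P t) (∫ t in Set.Ioc a x, Qf t)) := by
        rw [dotc_add_left, dotc_add_right, dotc_add_right]
        ring
    _ = dotc m (p a) (q a)
          + ∫ t in Set.Ioc a x, (dotc m (P t) (q t) + dotc m (p t) (Qf t)) := by
        rw [hstar, integral_add I1 I2, c1, c2]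
        ring

lemma prod_rule {p q P Qf : ℝ → Em m} (hp : Continuous p) (hq : Continuous q)
    (hP : ∀ a b : ℝ, IntegrableOn P (Set.Ioc a b) volume)
    (hQ : ∀ a b : ℝ, IntegrableOn Qf (Set.Ioc a b) volume)
    (hpP : ∀ a x : ℝ, p x = p a + ∫ t in a..x, P t)
    (hqQ : ∀ a x : ℝ, q x = q a + ∫ t in a..x, Qf t) (a x : ℝ) :
    dotc m (p x) (q x) = dotc m (p a) (q a)
      + ∫ t in a..x, (dotc m (P t) (q t) + dotc m (p t) (Qf t)) := by
  rcases le_total a x with h | h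
  · exact prod_rule_le hp hq hP hQ hpP hqQ h
  · have hrev := prod_rule_le hp hq hP hQ hpP hqQ h
    rw [intervalIntegral.integral_symm x a, hrev]
    ring

lemma alg (A S : Matrix (Fin m) (Fin m) ℂ) (x x1 y y1 F G : Em m) :
    (dotc m (mv m A x + x1) y1 + dotc m x (mv m (Sᴴ - Aᴴ ^ 2) y - mv m Aᴴ y1 - G))
      - (dotc m (mv m (S - A ^ 2) x - mv m A x1 - F) y + dotc m x1 (mv m Aᴴ y + y1))
      = dotc m F y - dotc m x G := by
  have hA2 : (A ^ 2)ᴴ = Aᴴ ^ 2 := by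
    rw [← Matrix.star_eq_conjTranspose, ← Matrix.star_eq_conjTranspose, star_pow]
  simp only [mv_sub, dotc_add_left, dotc_sub_left, dotc_add_right, dotc_sub_right, dotc_mv]
  rw [hA2]
  ring

lemma integrable_dotc_L2 {h k : ℝ → Em m} (hh : MemLp h 2 volume) (hk : MemLp k 2 volume) :
    Integrable (fun x => dotc m (h x) (k x)) volume := by
  have hm : AEStronglyMeasurable (fun x => dotc m (h x) (k x)) volume :=
    by have := hh.1.prodMk hk.1; exact continuous_dotc.comp_aestronglyMeasurable (f := fun x => (h x, k x)) this
  have hb : Integrable (fun x => ‖h x‖ * ‖k x‖) volume := by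
    have hsm : MemLp ((fun x => ‖h x‖) • fun x => ‖k x‖) 1 volume :=
      MemLp.smul hk.norm hh.norm
    exact memLp_one_iff_integrable.1 hsm
  exact Integrable.mono' hb hm (ae_of_all _ fun x => norm_dotc_le _ _)

lemma intOn_Ioc_of_compacts {F : ℝ → Em m}
    (h : ∀ K : Set ℝ, IsCompact K → IntegrableOn F K volume) (a b : ℝ) :
    IntegrableOn F (Set.Ioc a b) volume :=
  (h _ (isCompact_Icc (a := min a b) (b := max a b))).mono_set
    (Set.Ioc_subset_Icc_self.trans (Set.Icc_subset_Icc (min_le_left _ _) (le_max_right _ _)))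

lemma intervalIntegrable_dotc_left {P w : ℝ → Em m} (hw : Continuous w)
    (hP : ∀ a b : ℝ, IntegrableOn P (Set.Ioc a b) volume) (a b : ℝ) :
    IntervalIntegrable (fun t => dotc m (P t) (w t)) volume a b := by
  rw [intervalIntegrable_iff]
  obtain ⟨C, hC⟩ := (isCompact_Icc (a := min a b) (b := max a b)).exists_bound_of_continuousOn
    hw.continuousOn
  have hb : ∀ᵐ t ∂(volume.restrict (Set.Ioc (min a b) (max a b))), ‖w t‖ ≤ C :=
    (ae_restrict_iff' measurableSet_Ioc).2 (ae_of_all _ fun t ht => hC t ⟨ht.1.le, ht.2⟩)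
  exact integrable_dotc_left (hP (min a b) (max a b)) hw.aestronglyMeasurable hb

lemma intervalIntegrable_dotc_right {P w : ℝ → Em m} (hw : Continuous w)
    (hP : ∀ a b : ℝ, IntegrableOn P (Set.Ioc a b) volume) (a b : ℝ) :
    IntervalIntegrable (fun t => dotc m (w t) (P t)) volume a b := by
  rw [intervalIntegrable_iff]
  obtain ⟨C, hC⟩ := (isCompact_Icc (a := min a b) (b := max a b)).exists_bound_of_continuousOn
    hw.continuousOn
  have hb : ∀ᵐ t ∂(volume.restrict (Set.Ioc (min a b) (max a b))), ‖w t‖ ≤ C :=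
    (ae_restrict_iff' measurableSet_Ioc).2 (ae_of_all _ fun t ht => hC t ⟨ht.1.le, ht.2⟩)
  exact integrable_dotc_right (hP (min a b) (max a b)) hw.aestronglyMeasurable hb

end Helpers

/-- Generalized Lagrange identity on `ℝ`. -/
theorem stmt6 (m : ℕ) (hm : 1 ≤ m) (Q s : ℝ → Matrix (Fin m) (Fin m) ℂ)
    (hQ : LocL2 m Q) (hs : LocL1 m s)
    (u u1 f v v1 g : ℝ → Em m)
    (hu : IsLpair m Q s u u1 f) (hv : IsLplusPair m Q s v v1 g)
    (huL2 : MemLp u 2 (volume : Measure ℝ)) (hfL2 : MemLp f 2 (volume : Measure ℝ))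
    (hvL2 : MemLp v 2 (volume : Measure ℝ)) (hgL2 : MemLp g 2 (volume : Measure ℝ)) :
    ∃ A B : ℂ,
      Tendsto (fun t => dotc m (u t) (v1 t) - dotc m (u1 t) (v t)) atTop (𝓝 A) ∧
      Tendsto (fun t => dotc m (u t) (v1 t) - dotc m (u1 t) (v t)) atBot (𝓝 B) ∧
      (∫ x : ℝ, dotc m (f x) (v x)) - (∫ x : ℝ, dotc m (u x) (g x)) = A - B := by
  obtain ⟨hfl, hcu, hcu1, huP, hu1P⟩ := hu
  obtain ⟨hgl, hcv, hcv1, hvP, hv1P⟩ := hv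
  have hQ' : LocL2 m (fun t => (Q t)ᴴ) := locL2_conjT hQ
  have hs' : LocL1 m (fun t => (s t)ᴴ) := locL1_conjT hs
  have hFu : ∀ a b : ℝ, IntegrableOn (fun t => mv m (Q t) (u t) + u1 t) (Set.Ioc a b) volume :=
    intOn_Ioc_of_compacts (fun K hK =>
      (integrableOn_mv hK (fun i j => entries_Q_int hQ hK i j) hcu).add
        (hcu1.continuousOn.integrableOn_compact hK))
  have hGu : ∀ a b : ℝ, IntegrableOn
      (fun t => mv m (s t - Q t ^ 2) (u t) - mv m (Q t) (u1 t) - f t) (Set.Ioc a b) volume :=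
    intOn_Ioc_of_compacts (fun K hK =>
      ((integrableOn_mv hK (fun i j => entries_sQ2_int hQ hs hK i j) hcu).sub
        (integrableOn_mv hK (fun i j => entries_Q_int hQ hK i j) hcu1)).sub
        (hfl.integrableOn_isCompact hK))
  have hFv : ∀ a b : ℝ, IntegrableOn (fun t => mv m ((Q t)ᴴ) (v t) + v1 t)
      (Set.Ioc a b) volume :=
    intOn_Ioc_of_compacts (fun K hK =>
      (integrableOn_mv hK (fun i j => entries_Q_int hQ' hK i j) hcv).add
        (hcv1.continuousOn.integrableOn_compact hK))
  have hGv : ∀ a b : ℝ, IntegrableOn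
      (fun t => mv m ((s t)ᴴ - ((Q t)ᴴ) ^ 2) (v t) - mv m ((Q t)ᴴ) (v1 t) - g t)
      (Set.Ioc a b) volume :=
    intOn_Ioc_of_compacts (fun K hK =>
      ((integrableOn_mv hK (fun i j => entries_sQ2_int hQ' hs' hK i j) hcv).sub
        (integrableOn_mv hK (fun i j => entries_Q_int hQ' hK i j) hcv1)).sub
        (hgl.integrableOn_isCompact hK))
  have hφ : Integrable (fun t => dotc m (f t) (v t) - dotc m (u t) (g t)) volume :=
    (integrable_dotc_L2 hfL2 hvL2).sub (integrable_dotc_L2 huL2 hgL2)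
  have hW : ∀ z : ℝ, dotc m (u z) (v1 z) - dotc m (u1 z) (v z)
      = (dotc m (u 0) (v1 0) - dotc m (u1 0) (v 0))
        + ∫ t in (0:ℝ)..z, (dotc m (f t) (v t) - dotc m (u t) (g t)) := by
    intro z
    have h1 := prod_rule hcu hcv1 hFu hGv huP hv1P 0 z
    have h2 := prod_rule hcu1 hcv hGu hFv hu1P hvP 0 z
    have iD11 := intervalIntegrable_dotc_left (m := m) hcv1 hFu 0 z
    have iD12 := intervalIntegrable_dotc_right (m := m) hcu hGv 0 z
    have iD21 := intervalIntegrable_dotc_left (m := m) hcv hGu 0 z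
    have iD22 := intervalIntegrable_dotc_right (m := m) hcu1 hFv 0 z
    calc dotc m (u z) (v1 z) - dotc m (u1 z) (v z)
        = (dotc m (u 0) (v1 0)
            + ∫ t in (0:ℝ)..z, (dotc m (mv m (Q t) (u t) + u1 t) (v1 t)
              + dotc m (u t) (mv m ((s t)ᴴ - ((Q t)ᴴ) ^ 2) (v t) - mv m ((Q t)ᴴ) (v1 t) - g t)))
          - (dotc m (u1 0) (v 0)
            + ∫ t in (0:ℝ)..z, (dotc m (mv m (s t - Q t ^ 2) (u t) - mv m (Q t) (u1 t) - f t) (v t)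
              + dotc m (u1 t) (mv m ((Q t)ᴴ) (v t) + v1 t))) := by
          rw [← h1, ← h2]
      _ = (dotc m (u 0) (v1 0) - dotc m (u1 0) (v 0))
          + ((∫ t in (0:ℝ)..z, (dotc m (mv m (Q t) (u t) + u1 t) (v1 t)
              + dotc m (u t) (mv m ((s t)ᴴ - ((Q t)ᴴ) ^ 2) (v t) - mv m ((Q t)ᴴ) (v1 t) - g t)))
            - ∫ t in (0:ℝ)..z, (dotc m (mv m (s t - Q t ^ 2) (u t) - mv m (Q t) (u1 t) - f t) (v t)
              + dotc m (u1 t) (mv m ((Q t)ᴴ) (v t) + v1 t))) := by ring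
      _ = (dotc m (u 0) (v1 0) - dotc m (u1 0) (v 0))
          + ∫ t in (0:ℝ)..z, ((dotc m (mv m (Q t) (u t) + u1 t) (v1 t)
              + dotc m (u t) (mv m ((s t)ᴴ - ((Q t)ᴴ) ^ 2) (v t) - mv m ((Q t)ᴴ) (v1 t) - g t))
            - (dotc m (mv m (s t - Q t ^ 2) (u t) - mv m (Q t) (u1 t) - f t) (v t)
              + dotc m (u1 t) (mv m ((Q t)ᴴ) (v t) + v1 t))) := by
          rw [intervalIntegral.integral_sub (iD11.add iD12) (iD21.add iD22)]
      _ = (dotc m (u 0) (v1 0) - dotc m (u1 0) (v 0))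
          + ∫ t in (0:ℝ)..z, (dotc m (f t) (v t) - dotc m (u t) (g t)) := by
          congr 1
          apply intervalIntegral.integral_congr
          intro t _
          exact alg (Q t) (s t) (u t) (u1 t) (v t) (v1 t) (f t) (g t)
  refine ⟨(dotc m (u 0) (v1 0) - dotc m (u1 0) (v 0))
      + ∫ t in Set.Ioi (0:ℝ), (dotc m (f t) (v t) - dotc m (u t) (g t)),
    (dotc m (u 0) (v1 0) - dotc m (u1 0) (v 0))
      - ∫ t in Set.Iic (0:ℝ), (dotc m (f t) (v t) - dotc m (u t) (g t)), ?_, ?_, ?_⟩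
  · have hIoi := MeasureTheory.intervalIntegral_tendsto_integral_Ioi 0
      hφ.integrableOn (tendsto_id (α := ℝ))
    exact (tendsto_const_nhds.add hIoi).congr (fun z => (hW z).symm)
  · have hIic := MeasureTheory.intervalIntegral_tendsto_integral_Iic 0
      hφ.integrableOn (tendsto_id (α := ℝ))
    refine (tendsto_const_nhds.sub hIic).congr (fun z => ?_)
    rw [hW z, intervalIntegral.integral_symm 0 (id z)]
    simp only [id_eq]
    ring
  · have hsplit := intervalIntegral.integral_Iic_add_Ioi (b := (0:ℝ))
      hφ.integrableOn hφ.integrableOn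
    have hsub := MeasureTheory.integral_sub (integrable_dotc_L2 (m := m) hfL2 hvL2)
      (integrable_dotc_L2 (m := m) huL2 hgL2)
    rw [← hsub, ← hsplit]
    ring
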